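/- For natural numbers n and j and any complex number a, ∑_{k=0}^{n} (-n)_k (a)_k 2^k / ((-2n-j)_k k!) = (2^{2n+j} n! / (2n+j)!) · ∑_{r=0}^{j} (-1)^r C(j,r) (a/2 + 1/2 - r/2)_{n+j}. -/

import Mathlib

open Finset

open Polynomial

/-- The Pochhammer symbol (rising factorial) `(x)_k = x (x+1) ⋯ (x+k-1)`. -/
noncomputable def poch (x : ℂ) (k : ℕ) : ℂ := (ascPochhammer ℂ k).eval x

lemma poch_zero (x : ℂ) : poch x 0 = 1 := by simp [poch]

lemma poch_succ_right (x : ℂ) (k : ℕ) : poch x (k + 1) = poch x k * (x + k) := by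
  simp [poch, ascPochhammer_succ_eval]

lemma poch_succ_left (x : ℂ) (k : ℕ) : poch x (k + 1) = x * poch (x + 1) k := by
  simp [poch, ascPochhammer_succ_left, Polynomial.eval_comp]

lemma poch_eq_prod (x : ℂ) (m : ℕ) : poch x m = ∏ i ∈ range m, (x + i) := by
  induction m with
  | zero => simp [poch]
  | succ m ih => rw [poch_succ_right, ih, Finset.prod_range_succ]

lemma poch_diff (a : ℂ) (k : ℕ) :
    poch a (k + 1) - poch (a - 1) (k + 1) = (k + 1) * poch a k := by
  rw [poch_succ_right, poch_succ_left]
  have : a - 1 + 1 = a := by ring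
  rw [this]; ring

/-- Pascal manipulation for alternating binomial sums. -/
lemma pascal_sum (j : ℕ) (φ : ℕ → ℂ) :
    ∑ r ∈ range (j + 2), (-1 : ℂ) ^ r * ((j + 1).choose r : ℂ) * φ r
      = ∑ r ∈ range (j + 1), (-1 : ℂ) ^ r * (j.choose r : ℂ) * (φ r - φ (r + 1)) := by
  have h1 : ∑ r ∈ range (j + 2), (-1 : ℂ) ^ r * ((j + 1).choose r : ℂ) * φ r
      = (∑ r ∈ range (j + 1), (-1 : ℂ) ^ (r+1) * ((j + 1).choose (r+1) : ℂ) * φ (r+1)) + φ 0 := by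
    rw [Finset.sum_range_succ' (fun r => (-1 : ℂ) ^ r * ((j + 1).choose r : ℂ) * φ r)]
    simp
  have h2 : ∑ r ∈ range (j + 2), (-1 : ℂ) ^ r * (j.choose r : ℂ) * φ r
      = (∑ r ∈ range (j + 1), (-1 : ℂ) ^ (r+1) * (j.choose (r+1) : ℂ) * φ (r+1)) + φ 0 := by
    rw [Finset.sum_range_succ' (fun r => (-1 : ℂ) ^ r * (j.choose r : ℂ) * φ r)]
    simp
  have h3 : ∑ r ∈ range (j + 2), (-1 : ℂ) ^ r * (j.choose r : ℂ) * φ r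
      = ∑ r ∈ range (j + 1), (-1 : ℂ) ^ r * (j.choose r : ℂ) * φ r := by
    rw [Finset.sum_range_succ]
    simp [Nat.choose_eq_zero_of_lt (Nat.lt_succ_self j)]
  have h4 : ∀ r, ((j + 1).choose (r + 1) : ℂ) = (j.choose r : ℂ) + (j.choose (r+1) : ℂ) := by
    intro r; rw [Nat.choose_succ_succ]; push_cast; ring
  rw [h1]
  have h5 : (∑ r ∈ range (j + 1), (-1 : ℂ) ^ (r+1) * ((j + 1).choose (r+1) : ℂ) * φ (r+1))
      = (∑ r ∈ range (j + 1), (-1 : ℂ) ^ (r+1) * (j.choose r : ℂ) * φ (r+1))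
        + (∑ r ∈ range (j + 1), (-1 : ℂ) ^ (r+1) * (j.choose (r+1) : ℂ) * φ (r+1)) := by
    rw [← Finset.sum_add_distrib]
    refine Finset.sum_congr rfl fun r _ => ?_
    rw [h4]; ring
  rw [h5]
  have h6 : (∑ r ∈ range (j + 1), (-1 : ℂ) ^ (r+1) * (j.choose (r+1) : ℂ) * φ (r+1))
      = (∑ r ∈ range (j + 1), (-1 : ℂ) ^ r * (j.choose r : ℂ) * φ r) - φ 0 := by
    have := h2
    rw [h3] at this
    linear_combination -this
  rw [h6]
  have h8 : ∑ r ∈ range (j + 1), (-1 : ℂ) ^ r * (j.choose r : ℂ) * (φ r - φ (r + 1))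
      = (∑ r ∈ range (j + 1), (-1 : ℂ) ^ r * (j.choose r : ℂ) * φ r)
        + (∑ r ∈ range (j + 1), (-1 : ℂ) ^ (r+1) * (j.choose r : ℂ) * φ (r+1)) := by
    rw [← Finset.sum_add_distrib]
    refine Finset.sum_congr rfl fun r _ => ?_
    ring
  rw [h8]; ring


/-- j-th alternating binomial sum of `r^d` vanishes for `d < j` and is `(-1)^j j!` for `d = j`. -/
lemma fd_pow : ∀ j, ∀ d ≤ j, ∑ r ∈ range (j + 1), (-1 : ℂ) ^ r * (j.choose r : ℂ) * (r : ℂ) ^ d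
    = if d = j then (-1 : ℂ) ^ j * (j.factorial : ℂ) else 0 := by
  intro j
  induction j with
  | zero =>
    intro d hd
    interval_cases d
    simp
  | succ j ih =>
    intro d hd
    rw [show j + 1 + 1 = j + 2 from rfl,
      pascal_sum j (fun r => (r : ℂ) ^ d)]
    have key : ∀ r : ℕ, ((r : ℂ) ^ d - ((r : ℕ) + 1 : ℂ) ^ d)
        = -∑ e ∈ range d, (d.choose e : ℂ) * (r : ℂ) ^ e := by
      intro r
      have hb : ((r : ℂ) + 1) ^ d = ∑ e ∈ range (d + 1), (d.choose e : ℂ) * (r : ℂ) ^ e := by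
        rw [add_pow]
        refine Finset.sum_congr rfl fun e _ => ?_
        ring
      rw [hb, Finset.sum_range_succ]
      simp
    have step : ∑ r ∈ range (j + 1), (-1 : ℂ) ^ r * (j.choose r : ℂ) * ((r:ℂ)^d - ((r:ℕ)+1:ℂ)^d)
        = -∑ e ∈ range d, (d.choose e : ℂ) *
            ∑ r ∈ range (j + 1), (-1 : ℂ) ^ r * (j.choose r : ℂ) * (r : ℂ) ^ e := by
      have : ∀ r ∈ range (j+1), (-1 : ℂ) ^ r * (j.choose r : ℂ) * ((r:ℂ)^d - ((r:ℕ)+1:ℂ)^d)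
          = ∑ e ∈ range d, -((d.choose e : ℂ) * ((-1 : ℂ) ^ r * (j.choose r : ℂ) * (r : ℂ) ^ e)) := by
        intro r _
        rw [key r, ← Finset.sum_neg_distrib, Finset.mul_sum]
        refine Finset.sum_congr rfl fun e _ => ?_
        ring
      rw [Finset.sum_congr rfl this, Finset.sum_comm]
      rw [← Finset.sum_neg_distrib]
      refine Finset.sum_congr rfl fun e _ => ?_
      simp [Finset.mul_sum]
    have push : ∀ r : ℕ, ((r + 1 : ℕ) : ℂ) = (r : ℂ) + 1 := by intro r; push_cast; ring
    simp only [push] at step ⊢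
    rw [step]
    have inner : ∀ e ∈ range d, (d.choose e : ℂ) *
        (∑ r ∈ range (j + 1), (-1 : ℂ) ^ r * (j.choose r : ℂ) * (r : ℂ) ^ e)
        = if e = j then (d.choose e : ℂ) * ((-1 : ℂ) ^ j * (j.factorial : ℂ)) else 0 := by
      intro e he
      have he' := Finset.mem_range.mp he
      rw [ih e (by omega)]
      split <;> simp
    rw [Finset.sum_congr rfl inner, Finset.sum_ite_eq' (range d) j
      (fun e => (d.choose e : ℂ) * ((-1 : ℂ) ^ j * (j.factorial : ℂ)))]
    by_cases hdj : d = j + 1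
    · subst hdj
      simp [Nat.choose_succ_self_right, Nat.factorial_succ, pow_succ]
      push_cast
      ring
    · have : d ≤ j := by omega
      simp [Finset.mem_range, show ¬ j < d by omega, if_neg hdj]

/-- j-th alternating binomial difference of a product of `j` linear factors. -/
lemma fd_prod (j : ℕ) (c : ℕ → ℂ) :
    ∑ r ∈ range (j + 1), (-1 : ℂ) ^ r * (j.choose r : ℂ) * ∏ i ∈ range j, (c i - r)
      = (j.factorial : ℂ) := by
  set p : Polynomial ℂ := ∏ i ∈ range j, (Polynomial.C (c i) - Polynomial.X) with hp
  have heval : ∀ r : ℕ, p.eval (r : ℂ) = ∏ i ∈ range j, (c i - r) := by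
    intro r; simp [hp, Polynomial.eval_prod]
  have hdeg : p.natDegree < j + 1 := by
    have h1 : p.natDegree ≤ ∑ i ∈ range j, (Polynomial.C (c i) - Polynomial.X).natDegree :=
      Polynomial.natDegree_prod_le _ _
    have h2 : ∀ i ∈ range j, (Polynomial.C (c i) - Polynomial.X).natDegree ≤ 1 := by
      intro i _
      refine le_trans (Polynomial.natDegree_sub_le _ _) ?_
      simp
    have h3 : ∑ i ∈ range j, (Polynomial.C (c i) - Polynomial.X).natDegree ≤ j := by
      have := Finset.sum_le_card_nsmul (range j) (fun i => (Polynomial.C (c i) - Polynomial.X).natDegree) 1 h2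
      simpa using this
    omega
  have hcoeff : p.coeff j = (-1 : ℂ) ^ j := by
    have h0 : p = (-1 : ℂ[X]) ^ j * ∏ i ∈ range j, (Polynomial.X - Polynomial.C (c i)) := by
      rw [hp]
      calc ∏ i ∈ range j, (Polynomial.C (c i) - Polynomial.X)
          = ∏ i ∈ range j, ((-1 : ℂ[X]) * (Polynomial.X - Polynomial.C (c i))) :=
            Finset.prod_congr rfl fun i _ => by ring
        _ = (∏ _i ∈ range j, (-1 : ℂ[X])) * ∏ i ∈ range j, (Polynomial.X - Polynomial.C (c i)) :=
            Finset.prod_mul_distrib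
        _ = (-1 : ℂ[X]) ^ j * ∏ i ∈ range j, (Polynomial.X - Polynomial.C (c i)) := by
            rw [Finset.prod_const, Finset.card_range]
    have hq : (∏ i ∈ range j, (Polynomial.X - Polynomial.C (c i))).Monic :=
      Polynomial.monic_prod_of_monic _ _ fun i _ => Polynomial.monic_X_sub_C _
    have hdq : (∏ i ∈ range j, (Polynomial.X - Polynomial.C (c i))).natDegree = j := by
      rw [Polynomial.natDegree_prod]
      · simp
      · intro i _; exact Polynomial.X_sub_C_ne_zero _
    have h1 : (-1 : ℂ[X]) ^ j = Polynomial.C ((-1 : ℂ) ^ j) := by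
      rw [map_pow, map_neg, map_one]
    have h2 := hq.coeff_natDegree
    rw [hdq] at h2
    rw [h0, h1, Polynomial.coeff_C_mul, h2, mul_one]
  have main : ∑ r ∈ range (j + 1), (-1 : ℂ) ^ r * (j.choose r : ℂ) * ∏ i ∈ range j, (c i - r)
      = ∑ d ∈ range (j + 1), p.coeff d *
          ∑ r ∈ range (j + 1), (-1 : ℂ) ^ r * (j.choose r : ℂ) * (r : ℂ) ^ d := by
    have t1 : ∀ r ∈ range (j + 1), (-1 : ℂ) ^ r * (j.choose r : ℂ) * ∏ i ∈ range j, (c i - r)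
        = ∑ d ∈ range (j + 1), p.coeff d * ((-1 : ℂ) ^ r * (j.choose r : ℂ) * (r : ℂ) ^ d) := by
      intro r _
      rw [← heval r, Polynomial.eval_eq_sum_range' hdeg, Finset.mul_sum]
      refine Finset.sum_congr rfl fun d _ => by ring
    rw [Finset.sum_congr rfl t1, Finset.sum_comm]
    refine Finset.sum_congr rfl fun d _ => ?_
    rw [Finset.mul_sum]
  rw [main]
  have t2 : ∀ d ∈ range (j + 1), p.coeff d *
      (∑ r ∈ range (j + 1), (-1 : ℂ) ^ r * (j.choose r : ℂ) * (r : ℂ) ^ d)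
      = if d = j then p.coeff d * ((-1 : ℂ) ^ j * (j.factorial : ℂ)) else 0 := by
    intro d hd
    rw [fd_pow j d (by have := Finset.mem_range.mp hd; omega)]
    split <;> simp
  rw [Finset.sum_congr rfl t2, Finset.sum_ite_eq' (range (j + 1)) j
    (fun d => p.coeff d * ((-1 : ℂ) ^ j * (j.factorial : ℂ))), if_pos (Finset.self_mem_range_succ j),
    hcoeff, ← mul_assoc, ← mul_pow]
  simp

noncomputable def Ff (n j : ℕ) (a : ℂ) : ℂ :=
  ∑ k ∈ range (n + 1),
    poch a k * (∏ i ∈ range (n + j), ((n : ℂ) + 1 - k + i)) * 2 ^ k / (k.factorial : ℂ)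

noncomputable def Gg (n j : ℕ) (a : ℂ) : ℂ :=
  (2 : ℂ) ^ n * ∑ r ∈ range (j + 1),
    (-1 : ℂ) ^ r * (j.choose r : ℂ) * ∏ i ∈ range (n + j), (a - r + 1 + 2 * (i : ℂ))

lemma Ff_zero (j : ℕ) (a : ℂ) : Ff 0 j a = (j.factorial : ℂ) := by
  rw [Ff, Finset.sum_range_one]
  simp only [poch_zero, pow_zero, mul_one, one_mul, Nat.factorial_zero, Nat.cast_one, div_one,
    Nat.cast_zero, Nat.cast_ofNat, Nat.zero_add, CharP.cast_eq_zero]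
  rw [← Finset.prod_range_add_one_eq_factorial j]
  push_cast
  exact Finset.prod_congr rfl fun i _ => by ring

lemma Gg_zero (j : ℕ) (a : ℂ) : Gg 0 j a = (j.factorial : ℂ) := by
  rw [Gg]
  have : ∀ r ∈ range (j + 1), (-1 : ℂ) ^ r * (j.choose r : ℂ) *
      ∏ i ∈ range (0 + j), (a - r + 1 + 2 * (i : ℂ))
      = (-1 : ℂ) ^ r * (j.choose r : ℂ) * ∏ i ∈ range j, ((a + 1 + 2 * (i:ℂ)) - r) := by
    intro r _
    rw [Nat.zero_add]
    exact congrArg _ (Finset.prod_congr rfl fun i _ => by ring)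
  rw [Finset.sum_congr rfl this, fd_prod j (fun i => a + 1 + 2 * (i:ℂ))]
  ring

lemma Ff_rec (n j : ℕ) (a : ℂ) :
    Ff (n + 1) j a - Ff (n + 1) j (a - 1) = 2 * Ff n (j + 1) a := by
  rw [Ff, Ff, Ff, ← Finset.sum_sub_distrib]
  push_cast
  rw [Finset.sum_range_succ' (fun k =>
    poch a k * (∏ i ∈ range (n + 1 + j), ((n:ℂ) + 1 + 1 - k + i)) * 2 ^ k / (k.factorial : ℂ)
    - poch (a - 1) k * (∏ i ∈ range (n + 1 + j), ((n:ℂ) + 1 + 1 - k + i)) * 2 ^ k / (k.factorial : ℂ))]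
  have h0 : poch a 0 * (∏ i ∈ range (n + 1 + j), ((n:ℂ) + 1 + 1 - (0:ℕ) + i)) * 2 ^ (0:ℕ) / ((0:ℕ).factorial : ℂ)
      - poch (a - 1) 0 * (∏ i ∈ range (n + 1 + j), ((n:ℂ) + 1 + 1 - (0:ℕ) + i)) * 2 ^ (0:ℕ) / ((0:ℕ).factorial : ℂ) = 0 := by
    simp [poch_zero]
  rw [h0, add_zero, Finset.mul_sum]
  refine Finset.sum_congr rfl fun k hk => ?_
  have hd := poch_diff a k
  have hfac : ((k+1).factorial : ℂ) = ((k:ℂ)+1) * (k.factorial : ℂ) := by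
    rw [Nat.factorial_succ]; push_cast; ring
  have hprod : ∏ i ∈ range (n+1+j), ((n:ℂ)+1+1-((k+1:ℕ):ℂ)+i)
      = ∏ i ∈ range (n+(j+1)), ((n:ℂ)+1-(k:ℂ)+i) := by
    rw [show n+1+j = n+(j+1) by omega]
    exact Finset.prod_congr rfl fun i _ => by push_cast; ring
  have expand : poch a (k+1) = poch (a-1) (k+1) + ((k:ℂ)+1) * poch a k := by
    linear_combination hd
  have hk1 : ((k:ℂ)+1) ≠ 0 := Nat.cast_add_one_ne_zero k
  have hkf : ((k.factorial : ℕ) : ℂ) ≠ 0 := Nat.cast_ne_zero.2 k.factorial_ne_zero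
  rw [hprod, expand, hfac]
  field_simp
  ring

lemma Gg_rec (n j : ℕ) (a : ℂ) :
    Gg (n + 1) j a - Gg (n + 1) j (a - 1) = 2 * Gg n (j + 1) a := by
  rw [Gg, Gg, Gg]
  have hidx : n + (j + 1) = n + 1 + j := by omega
  rw [hidx]
  have hsub : ∀ r ∈ range (j + 1),
      (-1:ℂ)^r * (j.choose r : ℂ) * ∏ i ∈ range (n+1+j), ((a - 1) - r + 1 + 2*(i:ℂ))
      = (-1:ℂ)^r * (j.choose r : ℂ) * ∏ i ∈ range (n+1+j), (a - ((r+1:ℕ):ℂ) + 1 + 2*(i:ℂ)) := by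
    intro r _
    exact congrArg _ (Finset.prod_congr rfl fun i _ => by push_cast; ring)
  rw [Finset.sum_congr rfl hsub, ← mul_sub, ← Finset.sum_sub_distrib]
  have hcomb : ∀ r ∈ range (j + 1),
      ((-1:ℂ)^r * (j.choose r : ℂ) * ∏ i ∈ range (n+1+j), (a - (r:ℂ) + 1 + 2*(i:ℂ))
       - (-1:ℂ)^r * (j.choose r : ℂ) * ∏ i ∈ range (n+1+j), (a - ((r+1:ℕ):ℂ) + 1 + 2*(i:ℂ)))
      = (-1:ℂ)^r * (j.choose r : ℂ) *
        ((∏ i ∈ range (n+1+j), (a - (r:ℂ) + 1 + 2*(i:ℂ)))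
         - ∏ i ∈ range (n+1+j), (a - ((r+1:ℕ):ℂ) + 1 + 2*(i:ℂ))) := by
    intro r _; ring
  rw [Finset.sum_congr rfl hcomb]
  rw [← pascal_sum j (fun r => ∏ i ∈ range (n+1+j), (a - (r:ℂ) + 1 + 2*(i:ℂ)))]
  ring

noncomputable def Sc (j m : ℕ) : ℂ :=
  ∑ r ∈ range (j + 1), (-1:ℂ)^r * (j.choose r : ℂ) * ∏ i ∈ range m, ((1:ℂ) - r + 2 * (i:ℂ))

lemma prodN (N : ℕ) : ∀ M : ℕ,
    (N.factorial : ℂ) * ∏ i ∈ range M, ((N:ℂ) + 1 + i) = (((N + M).factorial : ℕ) : ℂ)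
  | 0 => by simp
  | (M+1) => by
    rw [Finset.prod_range_succ, ← mul_assoc, prodN N M, show N + (M+1) = (N+M) + 1 by omega,
      Nat.factorial_succ]
    push_cast
    ring

lemma dfact : ∀ n : ℕ,
    (2:ℂ)^n * (n.factorial : ℂ) * ∏ i ∈ range n, ((1:ℂ) + 2 * (i:ℂ)) = (((2*n).factorial : ℕ) : ℂ)
  | 0 => by simp
  | (n+1) => by
    rw [Finset.prod_range_succ, show 2*(n+1) = (2*n) + 1 + 1 by omega,
      Nat.factorial_succ, Nat.factorial_succ, Nat.factorial_succ]
    have := dfact n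
    push_cast at this ⊢
    linear_combination (2 * ((n:ℂ)+1) * (1 + 2*n)) * this

lemma Sc_zero (m : ℕ) : Sc 0 m = ∏ i ∈ range m, ((1:ℂ) + 2 * (i:ℂ)) := by
  rw [Sc, Finset.sum_range_one]
  simp

lemma Sc_one (m : ℕ) : Sc 1 (m + 1) = ∏ i ∈ range (m + 1), ((1:ℂ) + 2 * (i:ℂ)) := by
  rw [Sc]
  rw [Finset.sum_range_succ, Finset.sum_range_one]
  have h1 : ∏ i ∈ range (m+1), ((1:ℂ) - ((1:ℕ):ℂ) + 2 * (i:ℂ)) = 0 :=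
    Finset.prod_eq_zero (Finset.mem_range.mpr (Nat.succ_pos m)) (by push_cast; ring)
  rw [h1]
  simp

lemma Sc_step (j M : ℕ) : Sc (j + 2) (M + 1) = Sc (j + 1) (M + 1) - ((j:ℂ) + 1) * Sc j M := by
  rw [Sc, show j + 2 + 1 = (j+1) + 2 by omega,
    pascal_sum (j+1) (fun r => ∏ i ∈ range (M+1), ((1:ℂ) - r + 2 * (i:ℂ)))]
  have hsplit : ∀ r ∈ range (j + 2),
      (-1:ℂ)^r * ((j+1).choose r : ℂ) *
        ((∏ i ∈ range (M+1), ((1:ℂ) - (r:ℂ) + 2 * (i:ℂ)))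
          - ∏ i ∈ range (M+1), ((1:ℂ) - ((r+1:ℕ):ℂ) + 2 * (i:ℂ)))
      = (-1:ℂ)^r * ((j+1).choose r : ℂ) * (∏ i ∈ range (M+1), ((1:ℂ) - (r:ℂ) + 2 * (i:ℂ)))
        - (-1:ℂ)^r * ((j+1).choose r : ℂ) * ∏ i ∈ range (M+1), ((1:ℂ) - ((r+1:ℕ):ℂ) + 2 * (i:ℂ)) := by
    intro r _; ring
  rw [Finset.sum_congr rfl hsplit, Finset.sum_sub_distrib]
  have hT : ∑ r ∈ range (j + 2), (-1:ℂ)^r * ((j+1).choose r : ℂ) *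
      ∏ i ∈ range (M+1), ((1:ℂ) - ((r+1:ℕ):ℂ) + 2 * (i:ℂ))
      = ((j:ℂ) + 1) * Sc j M := by
    rw [Finset.sum_range_succ' (fun r => (-1:ℂ)^r * ((j+1).choose r : ℂ) *
      ∏ i ∈ range (M+1), ((1:ℂ) - ((r+1:ℕ):ℂ) + 2 * (i:ℂ)))]
    have hz : ∏ i ∈ range (M+1), ((1:ℂ) - ((0+1:ℕ):ℂ) + 2 * ((i:ℕ):ℂ)) = 0 :=
      Finset.prod_eq_zero (Finset.mem_range.mpr (Nat.succ_pos M)) (by push_cast; ring)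
    have h00 : (-1:ℂ)^(0:ℕ) * (((j+1).choose 0 : ℕ) : ℂ) *
        ∏ i ∈ range (M+1), ((1:ℂ) - ((0+1:ℕ):ℂ) + 2 * ((i:ℕ):ℂ)) = 0 := by
      rw [hz]; ring
    rw [h00, add_zero]
    have hterm : ∀ s ∈ range (j + 1),
        (-1:ℂ)^(s+1) * (((j+1).choose (s+1) : ℕ) : ℂ) *
          ∏ i ∈ range (M+1), ((1:ℂ) - ((s+1+1:ℕ):ℂ) + 2 * (i:ℂ))
        = ((j:ℂ)+1) * ((-1:ℂ)^s * ((j.choose s : ℕ) : ℂ) *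
            ∏ i ∈ range M, ((1:ℂ) - (s:ℂ) + 2 * (i:ℂ))) := by
      intro s _
      rw [Finset.prod_range_succ' (fun i => (1:ℂ) - ((s+1+1:ℕ):ℂ) + 2 * (i:ℂ)) M]
      have hpc : ∏ i ∈ range M, ((1:ℂ) - ((s+1+1:ℕ):ℂ) + 2 * (((i+1:ℕ)):ℂ))
          = ∏ i ∈ range M, ((1:ℂ) - (s:ℂ) + 2 * (i:ℂ)) :=
        Finset.prod_congr rfl fun i _ => by push_cast; ring
      rw [hpc]
      have hch : (((j+1).choose (s+1) : ℕ) : ℂ) * ((s:ℂ)+1)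
          = ((j:ℂ)+1) * ((j.choose s : ℕ) : ℂ) := by
        have := Nat.add_one_mul_choose_eq j s
        have h2 : ((Nat.succ j * j.choose s : ℕ) : ℂ)
            = (((j+1).choose (s+1) * Nat.succ s : ℕ) : ℂ) := by rw [this]
        push_cast at h2
        linear_combination -h2
      push_cast
      linear_combination ((-1:ℂ)^s * ∏ i ∈ range M, ((1:ℂ) - (s:ℂ) + 2 * (i:ℂ))) * hch
    rw [Finset.sum_congr rfl hterm, ← Finset.mul_sum, Sc]
  rw [hT, Sc]
  push_cast
  rfl

lemma anchor : ∀ j n : ℕ,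
    (2:ℂ)^n * (n.factorial : ℂ) * Sc j (n + j) = (((2*n+j).factorial : ℕ) : ℂ) := by
  intro j
  induction j using Nat.strong_induction_on with
  | _ j ih =>
    rcases j with _ | (_ | j)
    · intro n
      rw [Nat.add_zero, Sc_zero, dfact n]
      norm_num
    · intro n
      rw [Sc_one n]
      have hd := dfact (n+1)
      rw [show 2*(n+1) = (2*n+1)+1 by omega, Nat.factorial_succ, Nat.factorial_succ] at hd
      push_cast at hd
      refine mul_left_cancel₀ (a := (2:ℂ) * ((n:ℂ)+1))
        (mul_ne_zero two_ne_zero (Nat.cast_add_one_ne_zero n)) ?_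
      push_cast
      linear_combination hd
    · intro n
      rw [show n + (j+2) = (n+j+1)+1 by omega, Sc_step j (n+j+1)]
      have ih1 := ih (j+1) (by omega) (n+1)
      have ih0 := ih j (by omega) (n+1)
      rw [show (n+1) + (j+1) = (n+j+1)+1 by omega,
        show 2*(n+1)+(j+1) = (2*n+(j+2))+1 by omega, Nat.factorial_succ,
        Nat.factorial_succ] at ih1
      rw [show (n+1) + j = n+j+1 by omega,
        show 2*(n+1)+j = 2*n+(j+2) by omega, Nat.factorial_succ] at ih0
      push_cast at ih1 ih0 ⊢
      refine mul_left_cancel₀ (a := (2:ℂ) * ((n:ℂ)+1))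
        (mul_ne_zero two_ne_zero (Nat.cast_add_one_ne_zero n)) ?_
      linear_combination ih1 - ((j:ℂ)+1) * ih0

noncomputable def Fp (n j : ℕ) : Polynomial ℂ :=
  ∑ k ∈ range (n + 1),
    Polynomial.C ((∏ i ∈ range (n + j), ((n : ℂ) + 1 - k + i)) * 2 ^ k / (k.factorial : ℂ)) *
      ascPochhammer ℂ k

noncomputable def Gp (n j : ℕ) : Polynomial ℂ :=
  Polynomial.C ((2 : ℂ) ^ n) * ∑ r ∈ range (j + 1),
    Polynomial.C ((-1 : ℂ) ^ r * (j.choose r : ℂ)) *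
      ∏ i ∈ range (n + j), (Polynomial.X + Polynomial.C (1 - (r:ℂ) + 2 * (i:ℂ)))

lemma Fp_eval (n j : ℕ) (a : ℂ) : (Fp n j).eval a = Ff n j a := by
  rw [Fp, Ff, Polynomial.eval_finset_sum]
  refine Finset.sum_congr rfl fun k _ => ?_
  rw [Polynomial.eval_mul, Polynomial.eval_C]
  show _ * poch a k = _
  ring

lemma Gp_eval (n j : ℕ) (a : ℂ) : (Gp n j).eval a = Gg n j a := by
  rw [Gp, Gg, Polynomial.eval_mul, Polynomial.eval_C, Polynomial.eval_finset_sum]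
  refine congrArg _ (Finset.sum_congr rfl fun r _ => ?_)
  rw [Polynomial.eval_mul, Polynomial.eval_C, Polynomial.eval_prod]
  refine congrArg _ (Finset.prod_congr rfl fun i _ => ?_)
  rw [Polynomial.eval_add, Polynomial.eval_X, Polynomial.eval_C]
  ring

lemma rig (D : Polynomial ℂ) (h : ∀ b : ℂ, D.eval (b - 1) = D.eval b) (a : ℂ) :
    D.eval a = D.eval 0 := by
  have hm : ∀ (m : ℕ) (x : ℂ), D.eval (x - m) = D.eval x := by
    intro m
    induction m with
    | zero => intro x; norm_num
    | succ m ihm =>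
      intro x
      have h1 : x - ((m:ℂ) + 1) = (x - 1) - m := by ring
      push_cast
      rw [h1, ihm (x - 1)]
      exact h x
  set q := D - Polynomial.C (D.eval 0) with hq
  have hroot : ∀ m : ℕ, q.IsRoot (-(m : ℂ)) := by
    intro m
    have := hm m 0
    rw [zero_sub] at this
    simp [hq, Polynomial.IsRoot, this]
  have hinj : Function.Injective (fun m : ℕ => -(m : ℂ)) := by
    intro x y hxy
    simp only [neg_inj, Nat.cast_inj] at hxy
    exact hxy
  have hq0 : q = 0 := Polynomial.eq_zero_of_infinite_isRoot q
    (Set.infinite_of_injective_forall_mem hinj (fun m => hroot m))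
  have hD : D = Polynomial.C (D.eval 0) := by
    have := sub_eq_zero.mp hq0
    exact this
  rw [hD]
  simp

lemma anchor0 (n j : ℕ) : Ff n j 0 = Gg n j 0 := by
  have hF : Ff n j 0 = ∏ i ∈ range (n + j), ((n : ℂ) + 1 + i) := by
    rw [Ff]
    rw [Finset.sum_eq_single_of_mem 0 (Finset.mem_range.mpr (Nat.succ_pos n))]
    · simp [poch_zero]
    · intro k _ hk
      obtain ⟨k', rfl⟩ := Nat.exists_eq_succ_of_ne_zero hk
      have : poch 0 (k' + 1) = 0 := by rw [poch_succ_left]; ring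
      rw [this]
      ring
  have hG : Gg n j 0 = (2:ℂ)^n * Sc j (n + j) := by
    rw [Gg, Sc]
    refine congrArg _ (Finset.sum_congr rfl fun r _ => ?_)
    refine congrArg _ (Finset.prod_congr rfl fun i _ => ?_)
    ring
  rw [hF, hG]
  have h1 := anchor j n
  have h2 := prodN n (n + j)
  rw [show n + (n + j) = 2*n + j by omega] at h2
  have hne : ((n.factorial : ℕ) : ℂ) ≠ 0 := Nat.cast_ne_zero.2 n.factorial_ne_zero
  refine mul_left_cancel₀ hne ?_
  rw [h2]
  linear_combination -h1

lemma main_id : ∀ n j : ℕ, ∀ a : ℂ, Ff n j a = Gg n j a := by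
  intro n
  induction n with
  | zero =>
    intro j a
    rw [Ff_zero, Gg_zero]
  | succ n ih =>
    intro j a
    set D := Fp (n+1) j - Gp (n+1) j with hD
    have hshift : ∀ b : ℂ, D.eval (b - 1) = D.eval b := by
      intro b
      simp only [hD, Polynomial.eval_sub, Fp_eval, Gp_eval]
      have h1 := Ff_rec n j b
      have h2 := Gg_rec n j b
      have h3 := ih (j+1) b
      linear_combination -h1 + h2 - 2 * h3
    have h4 := rig D hshift a
    simp only [hD, Polynomial.eval_sub, Fp_eval, Gp_eval] at h4
    have h5 := anchor0 (n+1) j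
    linear_combination h4 + h5

lemma poch_neg (N k : ℕ) : poch (-(N:ℂ)) k = (-1:ℂ)^k * (N.descFactorial k : ℂ) := by
  rw [poch, ascPochhammer_eval_neg_eq_descPochhammer, descPochhammer_eval_eq_descFactorial]

lemma descFact_div {N k : ℕ} (h : k ≤ N) :
    (N.descFactorial k : ℂ) = (N.factorial : ℂ) / (((N - k).factorial : ℕ) : ℂ) := by
  have h1 := Nat.factorial_mul_descFactorial h
  have hne : (((N - k).factorial : ℕ) : ℂ) ≠ 0 := Nat.cast_ne_zero.2 (N - k).factorial_ne_zero
  rw [eq_div_iff hne]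
  exact_mod_cast (mul_comm _ _).trans h1

theorem twoF1_negn_a_neg2nMj (n j : ℕ) (a : ℂ) :
    ∑ k ∈ range (n + 1),
        poch (-(n : ℂ)) k * poch a k * 2 ^ k /
          (poch (-(2 * n : ℂ) - j) k * (k.factorial : ℂ))
      = (2 : ℂ) ^ (2 * n + j) * (n.factorial : ℂ) / (((2 * n + j).factorial : ℂ)) *
          ∑ r ∈ range (j + 1),
            (-1 : ℂ) ^ r * (j.choose r : ℂ) * poch (a / 2 + 1 / 2 - r / 2) (n + j) := by
  have hL : ∑ k ∈ range (n + 1),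
      poch (-(n : ℂ)) k * poch a k * 2 ^ k /
        (poch (-(2 * n : ℂ) - j) k * (k.factorial : ℂ))
      = (n.factorial : ℂ) / (((2*n+j).factorial : ℕ) : ℂ) * Ff n j a := by
    rw [Ff, Finset.mul_sum]
    refine Finset.sum_congr rfl fun k hk => ?_
    have hk' : k ≤ n := Nat.lt_succ_iff.mp (Finset.mem_range.mp hk)
    have e1 : -(2 * (n:ℂ)) - (j:ℂ) = -(((2*n+j : ℕ) : ℕ):ℂ) := by push_cast; ring
    rw [e1, poch_neg, poch_neg]
    rw [descFact_div hk', descFact_div (show k ≤ 2*n+j by omega)]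
    have hprod : ∏ i ∈ range (n+j), ((n:ℂ)+1-(k:ℂ)+(i:ℂ))
        = (((2*n+j-k).factorial : ℕ) : ℂ) / (((n-k).factorial : ℕ) : ℂ) := by
      have hp := prodN (n-k) (n+j)
      rw [show (n-k) + (n+j) = 2*n+j-k by omega] at hp
      have h2 : ∏ i ∈ range (n+j), ((n:ℂ)+1-(k:ℂ)+(i:ℂ))
          = ∏ i ∈ range (n+j), ((((n-k:ℕ)):ℂ)+1+(i:ℂ)) := by
        refine Finset.prod_congr rfl fun i _ => ?_
        rw [Nat.cast_sub hk']
        ring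
      have hne1 : (((n-k).factorial : ℕ) : ℂ) ≠ 0 := Nat.cast_ne_zero.2 (n-k).factorial_ne_zero
      rw [h2, eq_div_iff hne1]
      linear_combination hp
    rw [hprod]
    have hne1 : (((n-k).factorial : ℕ) : ℂ) ≠ 0 := Nat.cast_ne_zero.2 (n-k).factorial_ne_zero
    have hne2 : (((2*n+j-k).factorial : ℕ) : ℂ) ≠ 0 :=
      Nat.cast_ne_zero.2 (2*n+j-k).factorial_ne_zero
    have hne3 : (((2*n+j).factorial : ℕ) : ℂ) ≠ 0 := Nat.cast_ne_zero.2 (2*n+j).factorial_ne_zero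
    have hne4 : ((k.factorial : ℕ) : ℂ) ≠ 0 := Nat.cast_ne_zero.2 k.factorial_ne_zero
    have hne5 : ((-1:ℂ))^k ≠ 0 := pow_ne_zero k (by norm_num)
    field_simp
  have hR : (2 : ℂ) ^ (2 * n + j) * (n.factorial : ℂ) / (((2 * n + j).factorial : ℂ)) *
      ∑ r ∈ range (j + 1),
        (-1 : ℂ) ^ r * (j.choose r : ℂ) * poch (a / 2 + 1 / 2 - r / 2) (n + j)
      = (n.factorial : ℂ) / (((2*n+j).factorial : ℕ) : ℂ) * Gg n j a := by
    rw [Gg]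
    have hterm : ∀ r ∈ range (j + 1),
        (-1 : ℂ) ^ r * (j.choose r : ℂ) * poch (a / 2 + 1 / 2 - r / 2) (n + j)
        = (1/2:ℂ)^(n+j) * ((-1:ℂ)^r * (j.choose r : ℂ) *
            ∏ i ∈ range (n+j), (a - r + 1 + 2 * (i:ℂ))) := by
      intro r _
      rw [poch_eq_prod]
      have h3 : ∏ i ∈ range (n+j), (a/2 + 1/2 - (r:ℂ)/2 + (i:ℂ))
          = ∏ i ∈ range (n+j), ((1/2:ℂ) * (a - r + 1 + 2 * (i:ℂ))) :=
        Finset.prod_congr rfl fun i _ => by ring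
      rw [h3, Finset.prod_mul_distrib, Finset.prod_const, Finset.card_range]
      ring
    rw [Finset.sum_congr rfl hterm, ← Finset.mul_sum]
    have hpow : (2:ℂ)^(2*n+j) * (1/2:ℂ)^(n+j) = 2^n := by
      rw [one_div, inv_pow, show 2*n+j = n + (n+j) by omega, pow_add]
      field_simp
    set S := ∑ r ∈ range (j+1), (-1:ℂ)^r * (j.choose r : ℂ) *
      ∏ i ∈ range (n+j), (a - r + 1 + 2 * (i:ℂ))
    linear_combination ((n.factorial : ℂ) / (((2*n+j).factorial : ℕ) : ℂ) * S) * hpow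
  rw [hL, main_id n j a]
  exact hR.symm
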